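/- Define f̃ : V × V → ℝ by f̃(p, p′) = g(p) + g(p′). Then for every point (p, p′) ∈ V × V, the positivity index of the Euclidean Hessian of f̃ at (p, p′) is at least 2m: there exists a real linear subspace W ⊆ ℂ^m × ℂ^m with dim_ℝ W ≥ 2m on which the quadratic form (v, v′) ↦ D²f̃(p, p′)((v, v′), (v, v′)) is positive definite. -/

import Mathlib

open Complex Module

section Helpers

lemma abs_index {E : Type*} [NormedAddCommGroup E] [NormedSpace ℝ E] [FiniteDimensional ℝ E]
    (H : E →L[ℝ] E →L[ℝ] ℝ) (hsymm : ∀ u v, H u v = H v u)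
    (J : E ≃ₗ[ℝ] E) (hpos : ∀ x : E, x ≠ 0 → 0 < H x x + H (J x) (J x)) :
    ∃ W : Submodule ℝ E, Module.finrank ℝ E ≤ 2 * Module.finrank ℝ W ∧
      ∀ v ∈ W, v ≠ 0 → 0 < H v v := by
  classical
  set n := Module.finrank ℝ E with hn
  set P : Submodule ℝ E → Prop := fun W => ∀ v ∈ W, v ≠ 0 → 0 < H v v with hP
  set S : Set ℕ := {k | ∃ W, P W ∧ Module.finrank ℝ W = k} with hS
  have h0S : 0 ∈ S := by
    refine ⟨⊥, ?_, finrank_bot ℝ E⟩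
    intro v hv hne
    exact absurd (Submodule.mem_bot ℝ |>.1 hv) hne
  have hbdd : BddAbove S := by
    refine ⟨n, ?_⟩
    rintro k ⟨W, -, rfl⟩
    exact Submodule.finrank_le W
  obtain ⟨W, hPW, hWrank⟩ : sSup S ∈ S := Nat.sSup_mem ⟨0, h0S⟩ hbdd
  set n₀ := sSup S with hn₀
  refine ⟨W, ?_, hPW⟩
  -- the orthogonal-ish complement
  let bW := Module.finBasis ℝ ↥W
  let Φ : E →ₗ[ℝ] (Fin (Module.finrank ℝ ↥W) → ℝ) :=
    LinearMap.pi fun i => ((H (bW i : E)) : E →ₗ[ℝ] ℝ)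
  set N := LinearMap.ker Φ with hN
  have hNrank : n ≤ Module.finrank ℝ N + n₀ := by
    have h1 := LinearMap.finrank_range_add_finrank_ker Φ
    have h2 : Module.finrank ℝ (LinearMap.range Φ) ≤ Module.finrank ℝ ↥W := by
      refine le_trans (Submodule.finrank_le _) ?_
      simp [Module.finrank_fintype_fun_eq_card]
    have h3 : Module.finrank ℝ N = Module.finrank ℝ (LinearMap.ker Φ) := rfl
    have h4 : n = Module.finrank ℝ E := hn
    omega
  have hNorth : ∀ x ∈ N, ∀ u ∈ W, H u x = 0 := by
    intro x hx u hu
    have hb : ∀ i, H (bW i : E) x = 0 := fun i => congrFun (LinearMap.mem_ker.1 hx) i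
    have hrepr : u = ∑ i, bW.repr ⟨u, hu⟩ i • (bW i : E) := by
      have h := congrArg (Subtype.val) (bW.sum_repr ⟨u, hu⟩).symm
      simpa only [Submodule.coe_sum, Submodule.coe_smul] using h
    rw [hrepr]
    simp [map_sum, map_smul, ContinuousLinearMap.sum_apply, ContinuousLinearMap.smul_apply, hb]
  have hNnegsemi : ∀ x ∈ N, H x x ≤ 0 := by
    intro x hx
    by_contra hlt
    push_neg at hlt
    have hxW : x ∉ W := by
      intro hxW
      have := hNorth x hx x hxW
      rw [this] at hlt
      exact lt_irrefl 0 hlt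
    have hxmem : x ∈ W ⊔ Submodule.span ℝ {x} :=
      Submodule.mem_sup_right (Submodule.mem_span_singleton_self x)
    have hlt' : W < W ⊔ Submodule.span ℝ {x} :=
      lt_of_le_of_ne le_sup_left (fun h => hxW (h ▸ hxmem))
    have hP' : P (W ⊔ Submodule.span ℝ {x}) := by
      intro v hv hvne
      obtain ⟨u, hu, w, hw, rfl⟩ := Submodule.mem_sup.1 hv
      obtain ⟨c, rfl⟩ := Submodule.mem_span_singleton.1 hw
      have hux : H u x = 0 := hNorth x hx u hu
      have hxu : H x u = 0 := (hsymm x u).trans hux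
      have expand : H (u + c • x) (u + c • x) = H u u + c^2 * H x x := by
        simp only [map_add, map_smul, ContinuousLinearMap.add_apply,
          ContinuousLinearMap.smul_apply, smul_eq_mul, hux, hxu]
        ring
      rw [expand]
      rcases eq_or_ne u 0 with rfl | hune
      · have hcne : c ≠ 0 := by
          intro hc
          apply hvne
          simp [hc]
        have h0 : H (0:E) (0:E) = 0 := by simp
        rw [h0]
        have := mul_pos (pow_two_pos_of_ne_zero hcne) hlt
        linarith
      · have h1 := hPW u hu hune
        have h2 : 0 ≤ c^2 * H x x := mul_nonneg (sq_nonneg c) (le_of_lt hlt)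
        linarith
    have hmem : Module.finrank ℝ (W ⊔ Submodule.span ℝ {x} : Submodule ℝ E) ∈ S :=
      ⟨_, hP', rfl⟩
    have hle : Module.finrank ℝ (W ⊔ Submodule.span ℝ {x} : Submodule ℝ E) ≤ n₀ :=
      le_csSup hbdd hmem
    have hgt : n₀ < Module.finrank ℝ (W ⊔ Submodule.span ℝ {x} : Submodule ℝ E) := by
      rw [← hWrank]
      exact Submodule.finrank_lt_finrank_of_lt hlt'
    omega
  set N' := N.map (J : E →ₗ[ℝ] E) with hN'
  have hPN' : P N' := by
    rintro v hv hvne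
    obtain ⟨y, hy, rfl⟩ := Submodule.mem_map.1 hv
    have hyne : y ≠ 0 := by
      rintro rfl
      simp at hvne
    have h1 := hNnegsemi y hy
    have h2 := hpos y hyne
    have : (J : E →ₗ[ℝ] E) y = J y := rfl
    rw [this]
    linarith
  have hle' : Module.finrank ℝ N' ≤ n₀ := le_csSup hbdd ⟨N', hPN', rfl⟩
  have heq : Module.finrank ℝ N' = Module.finrank ℝ N := LinearEquiv.finrank_map_eq J N
  rw [hWrank]
  omega

lemma hasDerivAt_line (ε : ℂ) (t : ℝ) : HasDerivAt (fun s : ℝ => ε * (s : ℂ)) ε t := by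
  have h := (hasDerivAt_id t).smul_const ε
  simpa [Complex.real_smul, mul_comm] using h

lemma hasDerivAt_comp_line (ψ : ℂ → ℂ) (ε : ℂ) (t : ℝ) (h : DifferentiableAt ℂ ψ (ε * t)) :
    HasDerivAt (fun s : ℝ => ψ (ε * (s:ℂ))) (ε * deriv ψ (ε * t)) t := by
  have h1 := HasDerivAt.scomp (g₁ := ψ) t h.hasDerivAt (hasDerivAt_line ε t)
  exact h1

lemma analyticAt_deriv (ψ : ℂ → ℂ) {x : ℂ} (h : AnalyticAt ℂ ψ x) :
    AnalyticAt ℂ (deriv ψ) x := by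
  have h1 := ((ContinuousLinearMap.apply ℂ ℂ (1:ℂ)).analyticAt _).comp h.fderiv
  exact h1

lemma core_second_deriv (ψ₁ ψ₂ : ℂ → ℂ) (hψ₁ : AnalyticAt ℂ ψ₁ 0) (hψ₂ : AnalyticAt ℂ ψ₂ 0)
    (ε : ℂ) (K₀ K₁ K₂ : ℝ) :
    deriv (deriv (fun s : ℝ => K₀ + K₁ * s + K₂ * s ^ 2
      + Complex.normSq (ψ₁ (ε * (s:ℂ))) + Complex.normSq (ψ₂ (ε * (s:ℂ))))) 0
    = 2 * K₂ + (2 * Complex.normSq (ε * deriv ψ₁ 0)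
        + 2 * ((starRingEnd ℂ) (ψ₁ 0) * (ε ^ 2 * deriv (deriv ψ₁) 0)).re)
      + (2 * Complex.normSq (ε * deriv ψ₂ 0)
        + 2 * ((starRingEnd ℂ) (ψ₂ 0) * (ε ^ 2 * deriv (deriv ψ₂) 0)).re) := by
  have hd₁ : AnalyticAt ℂ (deriv ψ₁) 0 := analyticAt_deriv ψ₁ hψ₁
  have hd₂ : AnalyticAt ℂ (deriv ψ₂) 0 := analyticAt_deriv ψ₂ hψ₂
  have hev : ∀ᶠ z in nhds (0:ℂ), DifferentiableAt ℂ ψ₁ z ∧ DifferentiableAt ℂ ψ₂ z := by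
    filter_upwards [hψ₁.eventually_analyticAt, hψ₂.eventually_analyticAt] with z h1 h2
    exact ⟨h1.differentiableAt, h2.differentiableAt⟩
  have htend : Filter.Tendsto (fun t : ℝ => ε * (t:ℂ)) (nhds 0) (nhds 0) := by
    have hc : Continuous (fun t : ℝ => ε * (t:ℂ)) := by continuity
    have := hc.tendsto 0
    simpa using this
  have hevt : ∀ᶠ t : ℝ in nhds 0,
      DifferentiableAt ℂ ψ₁ (ε * (t:ℂ)) ∧ DifferentiableAt ℂ ψ₂ (ε * (t:ℂ)) :=
    htend.eventually hev
  set d₁ : ℝ → ℝ := fun t => K₁ + K₂ * (2 * t)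
      + 2 * ((ψ₁ (ε * (t:ℂ))).re * (ε * deriv ψ₁ (ε * (t:ℂ))).re
            + (ψ₁ (ε * (t:ℂ))).im * (ε * deriv ψ₁ (ε * (t:ℂ))).im)
      + 2 * ((ψ₂ (ε * (t:ℂ))).re * (ε * deriv ψ₂ (ε * (t:ℂ))).re
            + (ψ₂ (ε * (t:ℂ))).im * (ε * deriv ψ₂ (ε * (t:ℂ))).im) with hd₁def
  have hF' : ∀ᶠ t : ℝ in nhds 0, HasDerivAt (fun s : ℝ => K₀ + K₁ * s + K₂ * s ^ 2
      + Complex.normSq (ψ₁ (ε * (s:ℂ))) + Complex.normSq (ψ₂ (ε * (s:ℂ)))) (d₁ t) t := by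
    filter_upwards [hevt] with t ht
    obtain ⟨h1, h2⟩ := ht
    have hc1 := hasDerivAt_comp_line ψ₁ ε t h1
    have hc2 := hasDerivAt_comp_line ψ₂ ε t h2
    have hre1 := Complex.reCLM.hasFDerivAt.comp_hasDerivAt t hc1
    have him1 := Complex.imCLM.hasFDerivAt.comp_hasDerivAt t hc1
    have hre2 := Complex.reCLM.hasFDerivAt.comp_hasDerivAt t hc2
    have him2 := Complex.imCLM.hasFDerivAt.comp_hasDerivAt t hc2
    have hlin1 : HasDerivAt (fun s : ℝ => K₁ * s) K₁ t := by
      simpa using (hasDerivAt_id t).const_mul K₁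
    have hsq : HasDerivAt (fun s : ℝ => K₂ * s ^ 2) (K₂ * (2 * t)) t := by
      have := (hasDerivAt_pow 2 t).const_mul K₂
      simpa using this
    have hpoly := ((hasDerivAt_const t K₀).add hlin1).add hsq
    have htot := (hpoly.add ((hre1.mul hre1).add (him1.mul him1))).add
      ((hre2.mul hre2).add (him2.mul him2))
    have heqfun : (fun s : ℝ => K₀ + K₁ * s + K₂ * s ^ 2
        + Complex.normSq (ψ₁ (ε * (s:ℂ))) + Complex.normSq (ψ₂ (ε * (s:ℂ))))
        = fun s : ℝ => (K₀ + K₁ * s + K₂ * s ^ 2)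
          + ((Complex.reCLM (ψ₁ (ε * (s:ℂ)))) * (Complex.reCLM (ψ₁ (ε * (s:ℂ))))
            + (Complex.imCLM (ψ₁ (ε * (s:ℂ)))) * (Complex.imCLM (ψ₁ (ε * (s:ℂ)))))
          + ((Complex.reCLM (ψ₂ (ε * (s:ℂ)))) * (Complex.reCLM (ψ₂ (ε * (s:ℂ))))
            + (Complex.imCLM (ψ₂ (ε * (s:ℂ)))) * (Complex.imCLM (ψ₂ (ε * (s:ℂ))))) := by
      funext s
      simp [Complex.normSq_apply]
    rw [heqfun]
    refine htot.congr_deriv ?_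
    simp only [Function.comp_apply, Complex.reCLM_apply, Complex.imCLM_apply]
    ring
  have hderiv_eq : deriv (fun s : ℝ => K₀ + K₁ * s + K₂ * s ^ 2
      + Complex.normSq (ψ₁ (ε * (s:ℂ))) + Complex.normSq (ψ₂ (ε * (s:ℂ))))
      =ᶠ[nhds (0:ℝ)] d₁ := by
    filter_upwards [hF'] with t ht
    exact ht.deriv
  -- derivative of d₁ at 0
  have hz : ε * ((0:ℝ):ℂ) = 0 := by simp
  have hc1 : HasDerivAt (fun t : ℝ => ψ₁ (ε * (t:ℂ))) (ε * deriv ψ₁ (ε * ((0:ℝ):ℂ))) 0 :=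
    hasDerivAt_comp_line ψ₁ ε 0 (by rw [hz]; exact hψ₁.differentiableAt)
  have hc2 : HasDerivAt (fun t : ℝ => ψ₂ (ε * (t:ℂ))) (ε * deriv ψ₂ (ε * ((0:ℝ):ℂ))) 0 :=
    hasDerivAt_comp_line ψ₂ ε 0 (by rw [hz]; exact hψ₂.differentiableAt)
  have hc1' : HasDerivAt (fun t : ℝ => ε * deriv ψ₁ (ε * (t:ℂ)))
      (ε * (ε * deriv (deriv ψ₁) (ε * ((0:ℝ):ℂ)))) 0 :=
    (hasDerivAt_comp_line (deriv ψ₁) ε 0 (by rw [hz]; exact hd₁.differentiableAt)).const_mul ε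
  have hc2' : HasDerivAt (fun t : ℝ => ε * deriv ψ₂ (ε * (t:ℂ)))
      (ε * (ε * deriv (deriv ψ₂) (ε * ((0:ℝ):ℂ)))) 0 :=
    (hasDerivAt_comp_line (deriv ψ₂) ε 0 (by rw [hz]; exact hd₂.differentiableAt)).const_mul ε
  have hre1 := Complex.reCLM.hasFDerivAt.comp_hasDerivAt 0 hc1
  have him1 := Complex.imCLM.hasFDerivAt.comp_hasDerivAt 0 hc1
  have hre2 := Complex.reCLM.hasFDerivAt.comp_hasDerivAt 0 hc2
  have him2 := Complex.imCLM.hasFDerivAt.comp_hasDerivAt 0 hc2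
  have hre1' := Complex.reCLM.hasFDerivAt.comp_hasDerivAt 0 hc1'
  have him1' := Complex.imCLM.hasFDerivAt.comp_hasDerivAt 0 hc1'
  have hre2' := Complex.reCLM.hasFDerivAt.comp_hasDerivAt 0 hc2'
  have him2' := Complex.imCLM.hasFDerivAt.comp_hasDerivAt 0 hc2'
  have hlin2 : HasDerivAt (fun t : ℝ => K₂ * (2 * t)) (K₂ * 2) 0 := by
    simpa using ((hasDerivAt_id (0:ℝ)).const_mul (2:ℝ)).const_mul K₂
  have hlinfull := (hasDerivAt_const (0:ℝ) K₁).add hlin2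
  have hq := (hlinfull.add (((hre1.mul hre1').add (him1.mul him1')).const_mul 2)).add
    (((hre2.mul hre2').add (him2.mul him2')).const_mul 2)
  have hqd : HasDerivAt d₁ _ 0 := hq
  rw [hderiv_eq.deriv_eq, hqd.deriv]
  simp only [Function.comp_apply, Complex.reCLM_apply, Complex.imCLM_apply, Complex.normSq_apply, hz,
    Complex.mul_re, Complex.mul_im, Complex.conj_re, Complex.conj_im, pow_two]
  ring

lemma line_second_deriv {E : Type*} [NormedAddCommGroup E] [NormedSpace ℝ E]
    {F : E → ℝ} {a : E} (h1 : ∀ᶠ x in nhds a, DifferentiableAt ℝ F x)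
    (h2 : DifferentiableAt ℝ (fderiv ℝ F) a) (v : E) :
    deriv (deriv (fun s : ℝ => F (a + s • v))) 0 = fderiv ℝ (fderiv ℝ F) a v v := by
  have hline : ∀ t : ℝ, HasDerivAt (fun s : ℝ => a + s • v) v t := by
    intro t
    simpa using ((hasDerivAt_id t).smul_const v).const_add a
  have hcont : Continuous (fun s : ℝ => a + s • v) := by continuity
  have htend : Filter.Tendsto (fun s : ℝ => a + s • v) (nhds 0) (nhds a) := by
    have := hcont.tendsto 0
    simpa using this
  have hev : ∀ᶠ t : ℝ in nhds 0, DifferentiableAt ℝ F (a + t • v) := htend.eventually h1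
  have hF' : ∀ᶠ t : ℝ in nhds 0,
      HasDerivAt (fun s : ℝ => F (a + s • v)) (fderiv ℝ F (a + t • v) v) t := by
    filter_upwards [hev] with t ht
    exact ht.hasFDerivAt.comp_hasDerivAt t (hline t)
  have hde : deriv (fun s : ℝ => F (a + s • v)) =ᶠ[nhds 0]
      fun t => fderiv ℝ F (a + t • v) v := by
    filter_upwards [hF'] with t ht
    exact ht.deriv
  rw [hde.deriv_eq]
  have h0 : a + (0:ℝ) • v = a := by simp
  have hg : HasDerivAt (fun t : ℝ => fderiv ℝ F (a + t • v)) (fderiv ℝ (fderiv ℝ F) a v) 0 := by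
    have h2' : HasFDerivAt (fderiv ℝ F) (fderiv ℝ (fderiv ℝ F) a) (a + (0:ℝ) • v) := by
      rw [h0]
      exact h2.hasFDerivAt
    exact h2'.comp_hasDerivAt 0 (hline 0)
  have happ := (ContinuousLinearMap.apply ℝ ℝ v).hasFDerivAt.comp_hasDerivAt 0 hg
  exact happ.deriv

lemma ptwise (b c : ℂ) (s : ℝ) :
    Complex.normSq (b + (s:ℂ) * c)
      = Complex.normSq b + (2 * (b * (starRingEnd ℂ) c).re) * s + Complex.normSq c * s ^ 2 := by
  simp only [Complex.normSq_apply, Complex.add_re, Complex.add_im, Complex.mul_re,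
    Complex.mul_im, Complex.conj_re, Complex.conj_im, Complex.ofReal_re, Complex.ofReal_im]
  ring

end Helpers

theorem hessian_f_tilde_positivity_index_ge
    (m : ℕ) (hm : 1 ≤ m) (Δ : MvPolynomial (Fin m) ℂ) (hΔ : Δ ≠ 0)
    (g : (Fin m → ℂ) → ℝ)
    (hg : ∀ z, g z = (∑ j, ‖z j‖ ^ 2) + 1 / ‖MvPolynomial.eval z Δ‖ ^ 2)
    (f : (Fin m → ℂ) × (Fin m → ℂ) → ℝ)
    (hf : ∀ pq, f pq = g pq.1 + g pq.2)
    (p p' : Fin m → ℂ) (hp : MvPolynomial.eval p Δ ≠ 0) (hp' : MvPolynomial.eval p' Δ ≠ 0) :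
    ∃ W : Submodule ℝ ((Fin m → ℂ) × (Fin m → ℂ)), 2 * m ≤ Module.finrank ℝ W ∧
      ∀ v ∈ W, v ≠ 0 → 0 < (fderiv ℝ (fderiv ℝ f) (p, p') v) v := by
  classical
  have hnormsq : ∀ z : ℂ, ‖z‖ ^ 2 = Complex.normSq z := fun z => by
    rw [Complex.sq_norm]
  have hinv : ∀ c : ℂ, 1 / ‖c‖ ^ 2 = Complex.normSq c⁻¹ := fun c => by
    rw [← hnormsq, norm_inv, inv_pow, one_div]
  have hfeq : f = fun x => ((∑ j, Complex.normSq (x.1 j))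
      + Complex.normSq ((MvPolynomial.eval x.1 Δ)⁻¹))
      + ((∑ j, Complex.normSq (x.2 j)) + Complex.normSq ((MvPolynomial.eval x.2 Δ)⁻¹)) := by
    funext x
    rw [hf, hg, hg]
    simp only [hnormsq, hinv, Complex.normSq_inv, one_div]
  have heval : ∀ z : Fin m → ℂ, AnalyticAt ℂ (fun w : Fin m → ℂ => MvPolynomial.eval w Δ) z :=
    fun z => (AnalyticOnNhd.eval_mvPolynomial Δ) z (Set.mem_univ z)
  have hnsq_eq : Complex.normSq = fun z : ℂ => z.re * z.re + z.im * z.im := by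
    funext z; exact Complex.normSq_apply z
  have hnsq : ∀ c : ℂ, AnalyticAt ℝ Complex.normSq c := by
    intro c
    rw [hnsq_eq]
    exact ((Complex.reCLM.analyticAt c).mul (Complex.reCLM.analyticAt c)).add
      ((Complex.imCLM.analyticAt c).mul (Complex.imCLM.analyticAt c))
  have hfa : ∀ x : (Fin m → ℂ) × (Fin m → ℂ), MvPolynomial.eval x.1 Δ ≠ 0 →
      MvPolynomial.eval x.2 Δ ≠ 0 → AnalyticAt ℝ f x := by
    intro x hx1 hx2
    rw [hfeq]
    have hproj1 : ∀ j, AnalyticAt ℝ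
        (fun y : (Fin m → ℂ) × (Fin m → ℂ) => Complex.normSq (y.1 j)) x := fun j =>
      (hnsq _).comp
        (((ContinuousLinearMap.proj j).comp
          (ContinuousLinearMap.fst ℝ (Fin m → ℂ) (Fin m → ℂ))).analyticAt x)
    have hproj2 : ∀ j, AnalyticAt ℝ
        (fun y : (Fin m → ℂ) × (Fin m → ℂ) => Complex.normSq (y.2 j)) x := fun j =>
      (hnsq _).comp
        (((ContinuousLinearMap.proj j).comp
          (ContinuousLinearMap.snd ℝ (Fin m → ℂ) (Fin m → ℂ))).analyticAt x)
    have hinv1 : AnalyticAt ℝ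
        (fun y : (Fin m → ℂ) × (Fin m → ℂ) =>
          Complex.normSq ((MvPolynomial.eval y.1 Δ)⁻¹)) x := by
      have e1 : AnalyticAt ℂ
          (fun y : (Fin m → ℂ) × (Fin m → ℂ) => MvPolynomial.eval y.1 Δ) x :=
        (heval x.1).comp analyticAt_fst
      exact (hnsq _).comp (e1.inv hx1).restrictScalars
    have hinv2 : AnalyticAt ℝ
        (fun y : (Fin m → ℂ) × (Fin m → ℂ) =>
          Complex.normSq ((MvPolynomial.eval y.2 Δ)⁻¹)) x := by
      have e1 : AnalyticAt ℂ
          (fun y : (Fin m → ℂ) × (Fin m → ℂ) => MvPolynomial.eval y.2 Δ) x :=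
        (heval x.2).comp analyticAt_snd
      exact (hnsq _).comp (e1.inv hx2).restrictScalars
    exact ((Finset.analyticAt_fun_sum _ (fun j _ => hproj1 j)).add hinv1).add
      ((Finset.analyticAt_fun_sum _ (fun j _ => hproj2 j)).add hinv2)
  -- openness and smoothness near (p, p')
  have hcont1 : Continuous (fun y : (Fin m → ℂ) × (Fin m → ℂ) => MvPolynomial.eval y.1 Δ) := by
    rw [continuous_iff_continuousAt]
    exact fun x => ((heval x.1).comp analyticAt_fst).continuousAt
  have hcont2 : Continuous (fun y : (Fin m → ℂ) × (Fin m → ℂ) => MvPolynomial.eval y.2 Δ) := by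
    rw [continuous_iff_continuousAt]
    exact fun x => ((heval x.2).comp analyticAt_snd).continuousAt
  have hUopen : IsOpen {x : (Fin m → ℂ) × (Fin m → ℂ) |
      MvPolynomial.eval x.1 Δ ≠ 0 ∧ MvPolynomial.eval x.2 Δ ≠ 0} := by
    exact (isOpen_compl_singleton.preimage hcont1).inter
      (isOpen_compl_singleton.preimage hcont2)
  have hdiffev : ∀ᶠ x in nhds ((p, p') : (Fin m → ℂ) × (Fin m → ℂ)), DifferentiableAt ℝ f x := by
    filter_upwards [hUopen.mem_nhds ⟨hp, hp'⟩] with x hx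
    exact (hfa x hx.1 hx.2).differentiableAt
  have hCa : AnalyticAt ℝ f (p, p') := hfa (p, p') hp hp'
  have h2 : DifferentiableAt ℝ (fderiv ℝ f) (p, p') := by
    have h3 : ContDiffAt ℝ 2 f (p, p') := hCa.contDiffAt
    have h4 := h3.fderiv_right (m := 1) (by norm_num)
    exact h4.differentiableAt one_ne_zero
  have hsymm : ∀ u v, fderiv ℝ (fderiv ℝ f) (p, p') u v
      = fderiv ℝ (fderiv ℝ f) (p, p') v u := by
    have h3 : ContDiffAt ℝ 2 f (p, p') := hCa.contDiffAt
    exact h3.isSymmSndFDerivAt (by simp)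
  -- the complex structure J
  let J : ((Fin m → ℂ) × (Fin m → ℂ)) ≃ₗ[ℝ] ((Fin m → ℂ) × (Fin m → ℂ)) :=
    { toFun := fun x => Complex.I • x
      map_add' := fun x y => smul_add _ x y
      map_smul' := fun r x => by simpa using (smul_comm Complex.I r x)
      invFun := fun x => (-Complex.I) • x
      left_inv := fun x => by
        simp [smul_smul, Complex.I_mul_I]
      right_inv := fun x => by
        simp [smul_smul, Complex.I_mul_I] }
  -- key positivity
  have key : ∀ x : (Fin m → ℂ) × (Fin m → ℂ), x ≠ 0 →
      0 < fderiv ℝ (fderiv ℝ f) (p, p') x x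
        + fderiv ℝ (fderiv ℝ f) (p, p') (Complex.I • x) (Complex.I • x) := by
    intro x hx
    set ψ₁ : ℂ → ℂ := fun ζ => (MvPolynomial.eval (p + ζ • x.1) Δ)⁻¹ with hψ₁def
    set ψ₂ : ℂ → ℂ := fun ζ => (MvPolynomial.eval (p' + ζ • x.2) Δ)⁻¹ with hψ₂def
    have haff1 : AnalyticAt ℂ (fun ζ : ℂ => p + ζ • x.1) 0 := by
      have h1 : AnalyticAt ℂ (fun ζ : ℂ => ζ • x.1) 0 :=
        ((ContinuousLinearMap.id ℂ ℂ).smulRight x.1).analyticAt 0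
      exact analyticAt_const.add h1
    have haff2 : AnalyticAt ℂ (fun ζ : ℂ => p' + ζ • x.2) 0 := by
      have h1 : AnalyticAt ℂ (fun ζ : ℂ => ζ • x.2) 0 :=
        ((ContinuousLinearMap.id ℂ ℂ).smulRight x.2).analyticAt 0
      exact analyticAt_const.add h1
    have hψ₁ : AnalyticAt ℂ ψ₁ 0 := ((heval _).comp haff1).inv (by simpa using hp)
    have hψ₂ : AnalyticAt ℂ ψ₂ 0 := ((heval _).comp haff2).inv (by simpa using hp')
    have main : ∀ ε : ℂ,
        fderiv ℝ (fderiv ℝ f) (p, p') (ε • x) (ε • x)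
        = 2 * ((∑ j, Complex.normSq (ε * x.1 j)) + ∑ j, Complex.normSq (ε * x.2 j))
          + (2 * Complex.normSq (ε * deriv ψ₁ 0)
            + 2 * ((starRingEnd ℂ) (ψ₁ 0) * (ε ^ 2 * deriv (deriv ψ₁) 0)).re)
          + (2 * Complex.normSq (ε * deriv ψ₂ 0)
            + 2 * ((starRingEnd ℂ) (ψ₂ 0) * (ε ^ 2 * deriv (deriv ψ₂) 0)).re) := by
      intro ε
      rw [← line_second_deriv hdiffev h2 (ε • x)]
      have hcomp1 : ∀ s : ℝ, ∀ j, (((p, p') : (Fin m → ℂ) × (Fin m → ℂ)) + s • (ε • x)).1 j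
          = p j + (s : ℂ) * (ε * x.1 j) := by
        intro s j
        simp [Complex.real_smul]
      have hcomp2 : ∀ s : ℝ, ∀ j, (((p, p') : (Fin m → ℂ) × (Fin m → ℂ)) + s • (ε • x)).2 j
          = p' j + (s : ℂ) * (ε * x.2 j) := by
        intro s j
        simp [Complex.real_smul]
      have harg1 : ∀ s : ℝ, (((p, p') : (Fin m → ℂ) × (Fin m → ℂ)) + s • (ε • x)).1
          = p + (ε * (s:ℂ)) • x.1 := by
        intro s
        funext j
        rw [hcomp1 s j]
        simp only [Pi.add_apply, Pi.smul_apply, smul_eq_mul]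
        ring
      have harg2 : ∀ s : ℝ, (((p, p') : (Fin m → ℂ) × (Fin m → ℂ)) + s • (ε • x)).2
          = p' + (ε * (s:ℂ)) • x.2 := by
        intro s
        funext j
        rw [hcomp2 s j]
        simp only [Pi.add_apply, Pi.smul_apply, smul_eq_mul]
        ring
      have heqF : (fun s : ℝ => f (((p, p') : (Fin m → ℂ) × (Fin m → ℂ)) + s • (ε • x)))
          = fun s : ℝ =>
            ((∑ j, Complex.normSq (p j)) + ∑ j, Complex.normSq (p' j))
            + ((∑ j, 2 * ((p j) * (starRingEnd ℂ) (ε * x.1 j)).re)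
              + ∑ j, 2 * ((p' j) * (starRingEnd ℂ) (ε * x.2 j)).re) * s
            + ((∑ j, Complex.normSq (ε * x.1 j)) + ∑ j, Complex.normSq (ε * x.2 j)) * s ^ 2
            + Complex.normSq (ψ₁ (ε * (s:ℂ))) + Complex.normSq (ψ₂ (ε * (s:ℂ))) := by
        funext s
        rw [hfeq]
        beta_reduce
        have hsum1 : (∑ j, Complex.normSq
            ((((p, p') : (Fin m → ℂ) × (Fin m → ℂ)) + s • (ε • x)).1 j))
            = (∑ j, Complex.normSq (p j))
              + (∑ j, 2 * ((p j) * (starRingEnd ℂ) (ε * x.1 j)).re) * s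
              + (∑ j, Complex.normSq (ε * x.1 j)) * s ^ 2 := by
          rw [Finset.sum_congr rfl (fun j _ => by rw [hcomp1 s j, ptwise])]
          rw [Finset.sum_add_distrib, Finset.sum_add_distrib, ← Finset.sum_mul, ← Finset.sum_mul]
        have hsum2 : (∑ j, Complex.normSq
            ((((p, p') : (Fin m → ℂ) × (Fin m → ℂ)) + s • (ε • x)).2 j))
            = (∑ j, Complex.normSq (p' j))
              + (∑ j, 2 * ((p' j) * (starRingEnd ℂ) (ε * x.2 j)).re) * s
              + (∑ j, Complex.normSq (ε * x.2 j)) * s ^ 2 := by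
          rw [Finset.sum_congr rfl (fun j _ => by rw [hcomp2 s j, ptwise])]
          rw [Finset.sum_add_distrib, Finset.sum_add_distrib, ← Finset.sum_mul, ← Finset.sum_mul]
        rw [hsum1, hsum2, harg1 s, harg2 s]
        ring
      rw [heqF]
      exact core_second_deriv ψ₁ ψ₂ hψ₁ hψ₂ ε _ _ _
    have h1x := main 1
    have hIx := main Complex.I
    rw [one_smul] at h1x
    have hρ : 0 < (∑ j, Complex.normSq (x.1 j)) + ∑ j, Complex.normSq (x.2 j) := by
      have hnn1 : 0 ≤ ∑ j, Complex.normSq (x.1 j) :=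
        Finset.sum_nonneg fun j _ => Complex.normSq_nonneg _
      have hnn2 : 0 ≤ ∑ j, Complex.normSq (x.2 j) :=
        Finset.sum_nonneg fun j _ => Complex.normSq_nonneg _
      by_cases hx1 : x.1 = 0
      · have hx2 : x.2 ≠ 0 := fun h => hx (Prod.ext hx1 h)
        obtain ⟨j, hj⟩ : ∃ j, x.2 j ≠ 0 := by
          by_contra h
          push_neg at h
          exact hx2 (funext h)
        have hpos := Complex.normSq_pos.2 hj
        have hle : Complex.normSq (x.2 j) ≤ ∑ j, Complex.normSq (x.2 j) :=
          Finset.single_le_sum (fun i _ => Complex.normSq_nonneg _) (Finset.mem_univ j)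
        linarith
      · obtain ⟨j, hj⟩ : ∃ j, x.1 j ≠ 0 := by
          by_contra h
          push_neg at h
          exact hx1 (funext h)
        have hpos := Complex.normSq_pos.2 hj
        have hle : Complex.normSq (x.1 j) ≤ ∑ j, Complex.normSq (x.1 j) :=
          Finset.single_le_sum (fun i _ => Complex.normSq_nonneg _) (Finset.mem_univ j)
        linarith
    have hd1 : (0:ℝ) ≤ Complex.normSq (deriv ψ₁ 0) := Complex.normSq_nonneg _
    have hd2 : (0:ℝ) ≤ Complex.normSq (deriv ψ₂ 0) := Complex.normSq_nonneg _
    rw [h1x, hIx]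
    simp only [one_mul, one_pow, Complex.I_sq, Complex.normSq_mul, Complex.normSq_I,
      neg_mul, mul_neg, Complex.neg_re, neg_neg]
    ring_nf
    nlinarith [hρ, hd1, hd2]
  have key' : ∀ x : (Fin m → ℂ) × (Fin m → ℂ), x ≠ 0 →
      0 < fderiv ℝ (fderiv ℝ f) (p, p') x x
        + fderiv ℝ (fderiv ℝ f) (p, p') (J x) (J x) := by
    intro x hx
    exact key x hx
  obtain ⟨W, hW1, hW2⟩ := abs_index (fderiv ℝ (fderiv ℝ f) (p, p')) hsymm J key'
  refine ⟨W, ?_, hW2⟩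
  have hfr : Module.finrank ℝ ((Fin m → ℂ) × (Fin m → ℂ)) = 4 * m := by
    rw [Module.finrank_prod]
    have hpi : Module.finrank ℝ (Fin m → ℂ) = 2 * m := by
      rw [Module.finrank_pi_fintype]
      simp [Complex.finrank_real_complex, Finset.sum_const, mul_comm]
    rw [hpi]
    omega
  rw [hfr] at hW1
  omega
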